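/- Let ω ∈ ℝ, and define ξ_t = e^{−ωt} / ∫₀^T e^{−2ωs} ds for t ∈ [0,T]. If h : [0,T] → [0,∞) satisfies h(0) = h₀ > 0 and h'(t) ≤ 2ω h(t) − 2 ξ_t h₀^{1/2} h(t)^{1/2} whenever h(t) > 0, then h(T) = 0. -/

import Mathlib

open MeasureTheory

theorem coupling_succeeds_by_time_T (ω T h₀ : ℝ) (hT : 0 < T) (hh₀ : 0 < h₀)
    (h h' : ℝ → ℝ) (hder : ∀ t ∈ Set.Icc (0:ℝ) T, HasDerivAt h (h' t) t)
    (hnn : ∀ t ∈ Set.Icc (0:ℝ) T, 0 ≤ h t) (h0 : h 0 = h₀)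
    (hineq : ∀ t ∈ Set.Icc (0:ℝ) T, 0 < h t →
      h' t ≤ 2 * ω * h t -
        2 * (Real.exp (-(ω * t)) / ∫ s in (0:ℝ)..T, Real.exp (-(2 * ω * s))) *
          Real.sqrt h₀ * Real.sqrt (h t)) :
    h T = 0 := by
  have hcont : Continuous fun s : ℝ => Real.exp (-(2 * ω * s)) := by continuity
  set I : ℝ := ∫ s in (0:ℝ)..T, Real.exp (-(2 * ω * s)) with hIdef
  have hI : 0 < I := intervalIntegral.intervalIntegral_pos_of_pos (hcont.intervalIntegrable 0 T)
    (fun x => Real.exp_pos _) hT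
  set B : ℝ → ℝ := fun t => ∫ s in (0:ℝ)..t, Real.exp (-(2 * ω * s)) with hBdef
  have hB : ∀ t : ℝ, HasDerivAt B (Real.exp (-(2 * ω * t))) t := fun t =>
    intervalIntegral.integral_hasDerivAt_right (hcont.intervalIntegrable 0 t)
      (hcont.stronglyMeasurableAtFilter _ _) hcont.continuousAt
  set ψ : ℝ → ℝ := fun t => h₀ * (1 - B t / I) ^ 2 * Real.exp (ω * t) ^ 2 with hψdef
  set ψ' : ℝ → ℝ := fun t => 2 * ω * ψ t - 2 * h₀ * (1 - B t / I) / I with hψ'def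
  have hexp1 : ∀ t : ℝ, Real.exp (ω * t) ^ 2 * Real.exp (-(2 * ω * t)) = 1 := by
    intro t
    rw [sq, ← Real.exp_add, ← Real.exp_add]
    rw [show ω * t + ω * t + -(2 * ω * t) = 0 by ring, Real.exp_zero]
  have hψder : ∀ t : ℝ, HasDerivAt ψ (ψ' t) t := by
    intro t
    have h1 : HasDerivAt (fun t => 1 - B t / I) (-(Real.exp (-(2 * ω * t)) / I)) t := by
      simpa using (((hB t).div_const I).const_sub 1)
    have h2 : HasDerivAt (fun t : ℝ => Real.exp (ω * t)) (Real.exp (ω * t) * ω) t := by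
      simpa using ((hasDerivAt_id t).const_mul ω).exp
    have := ((h1.pow 2).const_mul h₀).mul (h2.pow 2)
    refine this.congr_deriv ?_
    have := hexp1 t
    simp only [hψ'def, hψdef, Pi.pow_apply]
    linear_combination (-(2 * h₀ * (1 - B t / I) / I)) * this
  -- key pointwise differential inequality on the set where h > ψ
  have key : ∀ t ∈ Set.Icc (0:ℝ) T, ψ t < h t →
      h' t - ψ' t ≤ 2 * ω * (h t - ψ t) := by
    intro t ht hlt
    have hψnn : 0 ≤ ψ t := by positivity
    have hpos : 0 < h t := lt_of_le_of_lt hψnn hlt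
    have hiq := hineq t ht hpos
    set g : ℝ := 1 - B t / I with hg
    have hkey2 : Real.sqrt h₀ * g * Real.exp (ω * t) ≤ Real.sqrt (h t) := by
      rcases le_or_gt g 0 with hgle | hgpos
      · have : Real.sqrt h₀ * g * Real.exp (ω * t) ≤ 0 :=
          mul_nonpos_of_nonpos_of_nonneg
            (mul_nonpos_of_nonneg_of_nonpos (Real.sqrt_nonneg h₀) hgle)
            (Real.exp_pos (ω * t)).le
        exact this.trans (Real.sqrt_nonneg _)
      · have hψeq : ψ t = (Real.sqrt h₀ * g * Real.exp (ω * t)) ^ 2 := by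
          simp only [hψdef]
          rw [mul_pow, mul_pow, Real.sq_sqrt hh₀.le]
        calc Real.sqrt h₀ * g * Real.exp (ω * t)
            = Real.sqrt (ψ t) := by rw [hψeq, Real.sqrt_sq (by positivity)]
          _ ≤ Real.sqrt (h t) := Real.sqrt_le_sqrt hlt.le
    have hξ : 0 ≤ 2 * (Real.exp (-(ω * t)) / I) * Real.sqrt h₀ := by positivity
    have hmul := mul_le_mul_of_nonneg_left hkey2 hξ
    have hee : Real.exp (-(ω * t)) * Real.exp (ω * t) = 1 := by
      rw [← Real.exp_add]; simp
    have hss : Real.sqrt h₀ * Real.sqrt h₀ = h₀ := Real.mul_self_sqrt hh₀.le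
    have hsimp : 2 * (Real.exp (-(ω * t)) / I) * Real.sqrt h₀ *
        (Real.sqrt h₀ * g * Real.exp (ω * t)) = 2 * h₀ * g / I := by
      field_simp
      linear_combination (g * Real.sqrt h₀ * Real.sqrt h₀) * hee
        + g * hss
    rw [hsimp] at hmul
    simp only [hψ'def]
    have : ψ' t = 2 * ω * ψ t - 2 * h₀ * g / I := rfl
    linarith
  -- continuity facts
  have hBdiff : Differentiable ℝ B := fun t => (hB t).differentiableAt
  have hψcont : Continuous ψ := by
    apply Continuous.mul
    · exact (continuous_const.mul (((continuous_const.sub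
        (hBdiff.continuous.div_const I)).pow 2)))
    · exact (Real.continuous_exp.comp (continuous_const.mul continuous_id)).pow 2
  have hhcont : ContinuousOn h (Set.Icc 0 T) := fun t ht =>
    (hder t ht).continuousAt.continuousWithinAt
  have hdcont : ContinuousOn (fun t => h t - ψ t) (Set.Icc 0 T) :=
    hhcont.sub hψcont.continuousOn
  -- suppose h T > 0
  have hTmem : T ∈ Set.Icc (0:ℝ) T := ⟨hT.le, le_rfl⟩
  by_contra hne
  have hhT : 0 < h T := lt_of_le_of_ne (hnn T hTmem) (Ne.symm hne)
  have hψT : ψ T = 0 := by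
    simp only [hψdef, hBdef]
    rw [← hIdef, div_self hI.ne']
    ring
  have hdT : 0 < h T - ψ T := by rw [hψT]; linarith
  set S : Set ℝ := Set.Icc 0 T ∩ (fun t => h t - ψ t) ⁻¹' Set.Iic 0 with hSdef
  have hS0 : (0:ℝ) ∈ S := by
    constructor
    · exact ⟨le_rfl, hT.le⟩
    · have hB0 : B 0 = 0 := intervalIntegral.integral_same
      simp only [Set.mem_preimage, Set.mem_Iic, hψdef, hB0, h0]
      simp
  have hSclosed : IsClosed S :=
    hdcont.preimage_isClosed_of_isClosed isClosed_Icc isClosed_Iic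
  have hSbdd : BddAbove S := (bddAbove_Icc).mono Set.inter_subset_left
  set t₀ : ℝ := sSup S with ht₀def
  have ht₀S : t₀ ∈ S := hSclosed.csSup_mem ⟨0, hS0⟩ hSbdd
  have ht₀T : t₀ < T := by
    rcases lt_or_eq_of_le ht₀S.1.2 with hlt | heq
    · exact hlt
    · exfalso
      have := ht₀S.2
      rw [heq] at this
      simp only [Set.mem_preimage, Set.mem_Iic] at this
      linarith
  have hpos_on : ∀ t ∈ Set.Ioc t₀ T, 0 < h t - ψ t := by
    intro t ht
    by_contra hle
    push_neg at hle
    have htmem : t ∈ S := ⟨⟨ht₀S.1.1.trans ht.1.le, ht.2⟩, hle⟩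
    exact absurd (le_csSup hSbdd htmem) (not_le.mpr ht.1)
  -- the rescaled difference e is antitone on [t₀, T]
  set e : ℝ → ℝ := fun t => (h t - ψ t) * Real.exp (-(2 * ω * t)) with hedef
  have heder : ∀ t ∈ Set.Icc (0:ℝ) T, HasDerivAt e
      ((h' t - ψ' t) * Real.exp (-(2 * ω * t)) +
        (h t - ψ t) * (Real.exp (-(2 * ω * t)) * -(2 * ω))) t := by
    intro t ht
    exact ((hder t ht).sub (hψder t)).mul
      (by simpa using ((hasDerivAt_id t).const_mul (2*ω)).neg.exp)
  have hsub : Set.Icc t₀ T ⊆ Set.Icc 0 T :=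
    Set.Icc_subset_Icc ht₀S.1.1 le_rfl
  have hanti : AntitoneOn e (Set.Icc t₀ T) := by
    apply antitoneOn_of_deriv_nonpos (convex_Icc t₀ T)
    · have hec : Continuous fun t : ℝ => Real.exp (-(2 * ω * t)) :=
        Real.continuous_exp.comp ((continuous_const.mul continuous_id).neg :
          Continuous fun t : ℝ => -(2 * ω * t))
      exact ((hhcont.mono hsub).sub hψcont.continuousOn).mul hec.continuousOn
    · intro x hx
      rw [interior_Icc] at hx
      exact (heder x (hsub (Set.Ioo_subset_Icc_self hx))).differentiableAt.differentiableWithinAt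
    · intro x hx
      rw [interior_Icc] at hx
      have hxI : x ∈ Set.Icc (0:ℝ) T := hsub (Set.Ioo_subset_Icc_self hx)
      rw [(heder x hxI).deriv]
      have hdx : 0 < h x - ψ x := hpos_on x ⟨hx.1, hx.2.le⟩
      have hkx := key x hxI (by linarith)
      have hep := Real.exp_pos (-(2 * ω * x))
      nlinarith
  have he1 : e T ≤ e t₀ := hanti ⟨le_rfl, ht₀T.le⟩ ⟨ht₀T.le, le_rfl⟩ ht₀T.le
  have he2 : e t₀ ≤ 0 := by
    have := ht₀S.2
    simp only [Set.mem_preimage, Set.mem_Iic] at this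
    exact mul_nonpos_of_nonpos_of_nonneg this (Real.exp_pos _).le
  have he3 : 0 < e T := mul_pos hdT (Real.exp_pos _)
  linarith
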